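/- Let F = (X; f_1, …, f_N) be an IFS on a complete metric space with attractor A and basin of attraction U, and suppose the induced map F : H(U) → H(U) is continuous with respect to the Hausdorff metric. Then A = ⋂_{K≥1} closure( ⋃_{k≥K} F^k(B) ) for every set B ⊆ U whose closure is a nonempty compact subset of U. -/

import Mathlib

open Filter Metric

/-- The set map `B ↦ f₁(B) ∪ ⋯ ∪ f_N(B)` of an IFS. -/
def ifsSet {X : Type*} {N : ℕ} (f : Fin N → X → X) (B : Set X) : Set X :=
  ⋃ n, f n '' B

/-- Let `F = (X; f₁, …, f_N)` be an IFS on a complete metric space with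
attractor `A` and basin of attraction `U` (an open set containing `A`, invariant in the
sense that `F` maps nonempty compact subsets of `U` to subsets of `U`, on which all
nonempty compact sets are attracted to `A`, and maximal with that property).  If the
induced map `F : H(U) → H(U)` is continuous with respect to the Hausdorff metric, then
`A = ⋂_{K ≥ 1} closure (⋃_{k ≥ K} F^k(B))` for every `B ⊆ U` whose closure is a
nonempty compact subset of `U`. -/
theorem attractor_eq_topological_upper_limit
    {X : Type*} [MetricSpace X] [CompleteSpace X] {N : ℕ}
    (f : Fin N → X → X) (hf : ∀ n, Continuous (f n))
    (A U : Set X)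
    (hAne : A.Nonempty) (hAcpt : IsCompact A)
    (hUopen : IsOpen U) (hAU : A ⊆ U)
    (hinv : ifsSet f A = A)
    (hFU : ∀ B : Set X, B ⊆ U → IsCompact B → B.Nonempty → ifsSet f B ⊆ U)
    (hattr : ∀ B : Set X, B ⊆ U → IsCompact B → B.Nonempty →
      Tendsto (fun k => hausdorffDist ((ifsSet f)^[k] B) A) atTop (nhds 0))
    (hmax : ∀ V : Set X, IsOpen V → A ⊆ V →
      (∀ B : Set X, B ⊆ V → IsCompact B → B.Nonempty →
        Tendsto (fun k => hausdorffDist ((ifsSet f)^[k] B) A) atTop (nhds 0)) → V ⊆ U)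
    (hcont : ∀ B : Set X, B ⊆ U → IsCompact B → B.Nonempty → ∀ ε : ℝ, 0 < ε →
      ∃ δ : ℝ, 0 < δ ∧ ∀ C : Set X, C ⊆ U → IsCompact C → C.Nonempty →
        hausdorffDist B C < δ → hausdorffDist (ifsSet f B) (ifsSet f C) < ε) :
    ∀ B : Set X, B ⊆ U → closure B ⊆ U → IsCompact (closure B) → (closure B).Nonempty →
      A = ⋂ (K : ℕ) (_ : 1 ≤ K), closure (⋃ (k : ℕ) (_ : K ≤ k), (ifsSet f)^[k] B) := by
  intro B hBU hcBU hcpt hne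
  have hBne : B.Nonempty := closure_nonempty_iff.1 hne
  -- there is at least one map
  obtain ⟨n0⟩ : Nonempty (Fin N) := by
    have h : (ifsSet f A).Nonempty := hinv.symm ▸ hAne
    obtain ⟨x, hx⟩ := h
    obtain ⟨n0, -⟩ := Set.mem_iUnion.1 hx
    exact ⟨n0⟩
  -- basic properties of ifsSet
  have hmono : ∀ {S T : Set X}, S ⊆ T → ifsSet f S ⊆ ifsSet f T := by
    intro S T h
    exact Set.iUnion_mono fun n => Set.image_mono h
  have hcompact : ∀ {S : Set X}, IsCompact S → IsCompact (ifsSet f S) := by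
    intro S hS
    exact isCompact_iUnion fun n => hS.image (hf n)
  have hnonempty : ∀ {S : Set X}, S.Nonempty → (ifsSet f S).Nonempty := by
    rintro S ⟨x, hx⟩
    exact ⟨f n0 x, Set.mem_iUnion.2 ⟨n0, ⟨x, hx, rfl⟩⟩⟩
  have hclsub : ∀ S : Set X, ifsSet f (closure S) ⊆ closure (ifsSet f S) := by
    intro S
    refine Set.iUnion_subset fun n => ?_
    refine (image_closure_subset_closure_image (hf n)).trans (closure_mono ?_)
    exact Set.subset_iUnion (fun m => f m '' S) n
  -- iterated versions
  have hsub1 : ∀ k, (ifsSet f)^[k] B ⊆ (ifsSet f)^[k] (closure B) := by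
    intro k
    induction k with
    | zero => exact subset_closure
    | succ k ih =>
      rw [Function.iterate_succ_apply', Function.iterate_succ_apply']
      exact hmono ih
  have hsub2 : ∀ k, (ifsSet f)^[k] (closure B) ⊆ closure ((ifsSet f)^[k] B) := by
    intro k
    induction k with
    | zero => exact subset_rfl
    | succ k ih =>
      rw [Function.iterate_succ_apply', Function.iterate_succ_apply']
      exact (hmono ih).trans (hclsub _)
  have hcptk : ∀ k, IsCompact ((ifsSet f)^[k] (closure B)) := by
    intro k
    induction k with
    | zero => exact hcpt
    | succ k ih => rw [Function.iterate_succ_apply']; exact hcompact ih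
  have hnek : ∀ k, ((ifsSet f)^[k] (closure B)).Nonempty := by
    intro k
    induction k with
    | zero => exact hne
    | succ k ih => rw [Function.iterate_succ_apply']; exact hnonempty ih
  have hnekB : ∀ k, ((ifsSet f)^[k] B).Nonempty := by
    intro k
    induction k with
    | zero => exact hBne
    | succ k ih => rw [Function.iterate_succ_apply']; exact hnonempty ih
  have hfin : ∀ k, EMetric.hausdorffEdist ((ifsSet f)^[k] (closure B)) A ≠ ⊤ := fun k =>
    hausdorffEdist_ne_top_of_nonempty_of_bounded (hnek k) hAne (hcptk k).isBounded
      hAcpt.isBounded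
  have htend := hattr (closure B) hcBU hcpt hne
  rw [Metric.tendsto_atTop] at htend
  apply subset_antisymm
  · -- A ⊆ ⋂
    intro a ha
    simp only [Set.mem_iInter]
    intro K hK
    have hSne : (⋃ (k : ℕ) (_ : K ≤ k), (ifsSet f)^[k] B).Nonempty := by
      obtain ⟨y, hy⟩ := hnekB K
      exact ⟨y, Set.mem_iUnion₂.2 ⟨K, le_refl K, hy⟩⟩
    rw [mem_closure_iff_infDist_zero hSne]
    refine le_antisymm (le_of_forall_pos_le_add ?_) infDist_nonneg
    intro ε hε
    obtain ⟨K', hK'⟩ := htend ε hε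
    set k := max K K' with hk
    have hd : hausdorffDist ((ifsSet f)^[k] (closure B)) A < ε := by
      have := hK' k (le_max_right _ _)
      rwa [Real.dist_eq, sub_zero, abs_of_nonneg hausdorffDist_nonneg] at this
    have hfin' : EMetric.hausdorffEdist A ((ifsSet f)^[k] (closure B)) ≠ ⊤ := by
      rw [EMetric.hausdorffEdist, EMetric.hausdorffEdist_comm]; exact hfin k
    have h1 : infDist a ((ifsSet f)^[k] (closure B)) < ε :=
      lt_of_le_of_lt (infDist_le_hausdorffDist_of_mem ha hfin')
        (by rwa [hausdorffDist_comm] at hd)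
    have h2 : infDist a (closure ((ifsSet f)^[k] B)) ≤
        infDist a ((ifsSet f)^[k] (closure B)) :=
      infDist_le_infDist_of_subset (hsub2 k) (hnek k)
    have h3 : infDist a (⋃ (j : ℕ) (_ : K ≤ j), (ifsSet f)^[j] B) ≤
        infDist a ((ifsSet f)^[k] B) :=
      infDist_le_infDist_of_subset
        (Set.subset_iUnion₂ (s := fun j _ => (ifsSet f)^[j] B) k (le_max_left _ _))
        (hnekB k)
    have h4 : infDist a ((ifsSet f)^[k] B) = infDist a (closure ((ifsSet f)^[k] B)) :=
      (infDist_closure (x := a)).symm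
    linarith
  · -- ⋂ ⊆ A
    intro x hx
    simp only [Set.mem_iInter] at hx
    have hxA : infDist x A = 0 := by
      refine le_antisymm (le_of_forall_pos_le_add ?_) infDist_nonneg
      intro ε hε
      obtain ⟨K', hK'⟩ := htend (ε / 2) (by linarith)
      have hxK := hx (max 1 K') (le_max_left _ _)
      obtain ⟨y, hy, hxy⟩ := Metric.mem_closure_iff.1 hxK (ε / 2) (by linarith)
      obtain ⟨k, hkK, hyk⟩ := Set.mem_iUnion₂.1 hy
      have hyc : y ∈ (ifsSet f)^[k] (closure B) := hsub1 k hyk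
      have hd : hausdorffDist ((ifsSet f)^[k] (closure B)) A < ε / 2 := by
        have := hK' k (le_trans (le_max_right _ _) hkK)
        rwa [Real.dist_eq, sub_zero, abs_of_nonneg hausdorffDist_nonneg] at this
      have h1 : infDist y A < ε / 2 :=
        lt_of_le_of_lt (infDist_le_hausdorffDist_of_mem hyc (hfin k)) hd
      have h2 : infDist x A ≤ infDist y A + dist x y := infDist_le_infDist_add_dist
      linarith
    have := (mem_closure_iff_infDist_zero hAne).2 hxA
    rwa [hAcpt.isClosed.closure_eq] at this
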